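/- arXiv:2310.03600 — 2 statements merged into one kernel-verified Lean document; each statement's English description precedes it below -/
import Mathlib

section
/- Let p ≥ 2 and q > 1. For every a, b ∈ ℝ, J_q(a - b)·(J_p(a) - J_p(b)) ≥ (p-1)·(q/(p-2+q))^q · | |a|^{(p-2)/q} a - |b|^{(p-2)/q} b |^q, where J_r(t) = |t|^{r-2} t. -/
noncomputable def J (r t : ℝ) : ℝ := |t| ^ (r - 2) * t

open MeasureTheory intervalIntegral Real Filter

lemma cont_abs_rpow (c : ℝ) (hc : 0 ≤ c) : Continuous fun t : ℝ => |t| ^ c :=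
  (Real.continuous_rpow_const hc).comp continuous_abs

lemma hasDerivAt_abs_rpow_mul (c : ℝ) (hc : 0 ≤ c) (t : ℝ) :
    HasDerivAt (fun t : ℝ => |t| ^ c * t) ((c + 1) * |t| ^ c) t := by
  rcases eq_or_lt_of_le hc with h0 | hcpos
  · subst h0
    simp only [Real.rpow_zero, one_mul]
    exact (hasDerivAt_id t).congr_deriv (by norm_num)
  rcases lt_trichotomy t 0 with ht | ht | ht
  · have key : HasDerivAt (fun t : ℝ => -((-t) ^ (c + 1))) ((c + 1) * (-t) ^ c) t := by
      have h1 : HasDerivAt (fun t : ℝ => (-t : ℝ)) (-1) t := (hasDerivAt_id t).neg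
      have h2 := (Real.hasDerivAt_rpow_const (p := c + 1)
        (Or.inl (by linarith : (-t : ℝ) ≠ 0))).comp t h1
      have := h2.neg
      refine this.congr_deriv ?_
      have : (-t) ^ (c + 1 - 1) = (-t) ^ c := by ring_nf
      rw [this]; ring
    have hev : (fun t : ℝ => |t| ^ c * t) =ᶠ[nhds t] fun t : ℝ => -((-t) ^ (c + 1)) := by
      filter_upwards [Iio_mem_nhds ht] with x hx
      have hx' : x < 0 := hx
      rw [abs_of_neg hx', Real.rpow_add_one (neg_ne_zero.mpr (ne_of_lt hx'))]
      ring
    have := key.congr_of_eventuallyEq hev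
    rwa [abs_of_neg ht]
  · subst ht
    rw [hasDerivAt_iff_tendsto_slope]
    have : ∀ x : ℝ, x ≠ 0 → slope (fun t : ℝ => |t| ^ c * t) 0 x = |x| ^ c := by
      intro x hx
      simp only [slope, sub_zero, abs_zero, Real.zero_rpow (ne_of_gt hcpos), mul_zero,
        zero_mul, div_eq_inv_mul]
      field_simp
      rw [vsub_eq_sub, sub_zero, smul_eq_mul]
      field_simp
    have habs : |(0:ℝ)| ^ c = 0 := by
      rw [abs_zero, Real.zero_rpow (ne_of_gt hcpos)]
    rw [habs, mul_zero]
    have hcont : Filter.Tendsto (fun x : ℝ => |x| ^ c) (nhdsWithin 0 {(0:ℝ)}ᶜ) (nhds 0) := by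
      have := ((cont_abs_rpow c hc).tendsto 0).mono_left (nhdsWithin_le_nhds (s := {(0:ℝ)}ᶜ))
      rwa [habs] at this
    refine hcont.congr' ?_
    filter_upwards [self_mem_nhdsWithin] with x hx
    exact (this x hx).symm
  · have key : HasDerivAt (fun t : ℝ => t ^ (c + 1)) ((c + 1) * t ^ c) t := by
      have h2 := Real.hasDerivAt_rpow_const (p := c + 1) (Or.inl (ne_of_gt ht))
      convert h2 using 1
      have : t ^ (c + 1 - 1) = t ^ c := by ring_nf
      rw [this]
    have hev : (fun t : ℝ => |t| ^ c * t) =ᶠ[nhds t] fun t : ℝ => t ^ (c + 1) := by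
      filter_upwards [Ioi_mem_nhds ht] with x hx
      rw [abs_of_pos hx, Real.rpow_add_one (ne_of_gt hx)]
    have := key.congr_of_eventuallyEq hev
    rwa [abs_of_pos ht]

lemma ftc_abs_rpow (c : ℝ) (hc : 0 ≤ c) (a b : ℝ) :
    |a| ^ c * a - |b| ^ c * b = (c + 1) * ∫ t in b..a, |t| ^ c := by
  rw [← intervalIntegral.integral_const_mul]
  exact (intervalIntegral.integral_eq_sub_of_hasDerivAt
    (fun t _ => hasDerivAt_abs_rpow_mul c hc t)
    ((continuous_const.mul (cont_abs_rpow c hc)).intervalIntegrable b a)).symm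

lemma holder_step (q : ℝ) (hq : 1 < q) (s : ℝ) (hs : 0 ≤ s) {a b : ℝ} (hba : b ≤ a) :
    (∫ t in b..a, |t| ^ s) ^ q ≤ (a - b) ^ (q - 1) * ∫ t in b..a, |t| ^ (s * q) := by
  set μ := volume.restrict (Set.Ioc b a) with hμ
  haveI : IsFiniteMeasure μ := by
    constructor
    rw [hμ, Measure.restrict_apply_univ, Real.volume_Ioc]
    exact ENNReal.ofReal_lt_top
  have hq0 : (0:ℝ) < q := by linarith
  have hqne : q ≠ 0 := ne_of_gt hq0
  have hconj : q.HolderConjugate (q / (q - 1)) := Real.HolderConjugate.conjExponent hq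
  set M : ℝ := max |a| |b| with hM
  have hbound : ∀ t ∈ Set.Ioc b a, |t| ≤ M := by
    intro t ht
    rw [abs_le]
    constructor
    · calc -M ≤ -|b| := by simp [hM]
        _ ≤ b := neg_abs_le b
        _ ≤ t := le_of_lt ht.1
    · calc t ≤ a := ht.2
        _ ≤ |a| := le_abs_self a
        _ ≤ M := le_max_left _ _
  have hmemf : MemLp (fun t : ℝ => |t| ^ s) (ENNReal.ofReal q) μ := by
    apply MemLp.of_bound ((cont_abs_rpow s hs).aestronglyMeasurable) (M ^ s)
    rw [hμ]
    filter_upwards [ae_restrict_mem measurableSet_Ioc] with t ht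
    rw [Real.norm_of_nonneg (Real.rpow_nonneg (abs_nonneg t) s)]
    exact Real.rpow_le_rpow (abs_nonneg t) (hbound t ht) hs
  have hmemg : MemLp (fun _ : ℝ => (1:ℝ)) (ENNReal.ofReal (q / (q-1))) μ := memLp_const 1
  have holder := MeasureTheory.integral_mul_le_Lp_mul_Lq_of_nonneg hconj
    (Filter.Eventually.of_forall (fun t => Real.rpow_nonneg (abs_nonneg t) s))
    (Filter.Eventually.of_forall (fun _ => zero_le_one)) hmemf hmemg
  simp only [mul_one] at holder
  have h1 : ∫ t, (1:ℝ) ^ (q / (q-1)) ∂μ = a - b := by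
    simp [hμ, Real.volume_Ioc, ENNReal.toReal_ofReal (by linarith : (0:ℝ) ≤ a - b), hba]
  have h2 : ∫ t, (|t| ^ s) ^ q ∂μ = ∫ t, |t| ^ (s * q) ∂μ := by
    congr 1; funext t; rw [← Real.rpow_mul (abs_nonneg t)]
  rw [h1, h2] at holder
  -- rewrite interval integrals as set integrals
  rw [intervalIntegral.integral_of_le hba, intervalIntegral.integral_of_le hba]
  set I1 := ∫ t in Set.Ioc b a, |t| ^ s with hI1
  set I2 := ∫ t in Set.Ioc b a, |t| ^ (s * q) with hI2
  have hI1nn : 0 ≤ I1 :=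
    setIntegral_nonneg measurableSet_Ioc (fun t _ => Real.rpow_nonneg (abs_nonneg t) s)
  have hI2nn : 0 ≤ I2 :=
    setIntegral_nonneg measurableSet_Ioc (fun t _ => Real.rpow_nonneg (abs_nonneg t) (s*q))
  have habnn : (0:ℝ) ≤ a - b := by linarith
  calc I1 ^ q ≤ (I2 ^ (1/q) * (a-b) ^ (1/(q/(q-1)))) ^ q :=
        Real.rpow_le_rpow hI1nn holder (le_of_lt hq0)
    _ = (a - b) ^ (q - 1) * I2 := by
        rw [Real.mul_rpow (Real.rpow_nonneg hI2nn _) (Real.rpow_nonneg habnn _),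
          ← Real.rpow_mul hI2nn, ← Real.rpow_mul habnn,
          one_div_mul_cancel hqne, Real.rpow_one]
        have : 1 / (q / (q - 1)) * q = q - 1 := by field_simp
        rw [this, mul_comm]

lemma key (p q : ℝ) (hp : 2 ≤ p) (hq : 1 < q) (a b : ℝ) (hba : b ≤ a) :
    J q (a - b) * (J p a - J p b) ≥
      (p - 1) * (q / (p - 2 + q)) ^ q *
        |(|a| ^ ((p - 2) / q) * a - |b| ^ ((p - 2) / q) * b)| ^ q := by
  have hq0 : (0:ℝ) < q := by linarith
  have hqne : q ≠ 0 := ne_of_gt hq0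
  rcases eq_or_lt_of_le hba with rfl | hlt
  · simp [J, Real.zero_rpow hqne]
  set s := (p - 2) / q with hs_def
  have hs : 0 ≤ s := div_nonneg (by linarith) (by linarith)
  have hsq : s * q = p - 2 := div_mul_cancel₀ _ hqne
  set I1 := ∫ t in b..a, |t| ^ s with hI1_def
  set I2 := ∫ t in b..a, |t| ^ (p - 2) with hI2_def
  have hF : |a| ^ s * a - |b| ^ s * b = (s + 1) * I1 := ftc_abs_rpow s hs a b
  have hJ : J p a - J p b = (p - 1) * I2 := by
    have := ftc_abs_rpow (p - 2) (by linarith) a b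
    simp only [J]
    rw [this, ← hI2_def]; ring
  have hI1nn : 0 ≤ I1 :=
    intervalIntegral.integral_nonneg hba (fun t _ => Real.rpow_nonneg (abs_nonneg t) s)
  have hI2nn : 0 ≤ I2 :=
    intervalIntegral.integral_nonneg hba (fun t _ => Real.rpow_nonneg (abs_nonneg t) _)
  have hab : (0:ℝ) < a - b := by linarith
  have hJq : J q (a - b) = (a - b) ^ (q - 1) := by
    simp only [J]
    rw [abs_of_pos hab, show q - 1 = q - 2 + 1 by ring, Real.rpow_add_one (ne_of_gt hab)]
  have hpq0 : (0:ℝ) < p - 2 + q := by linarith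
  have hs1 : s + 1 = (p - 2 + q) / q := by
    rw [hs_def]; field_simp
  have habs : |(|a| ^ s * a - |b| ^ s * b)| ^ q = (s + 1) ^ q * I1 ^ q := by
    rw [hF, abs_of_nonneg (mul_nonneg (by linarith) hI1nn),
      Real.mul_rpow (by linarith) hI1nn]
  have hcoef : (q / (p - 2 + q)) ^ q * (s + 1) ^ q = 1 := by
    rw [← Real.mul_rpow (le_of_lt (div_pos hq0 hpq0)) (by linarith), hs1]
    rw [div_mul_div_comm, mul_comm, div_self (by positivity), Real.one_rpow]
  have hhold : I1 ^ q ≤ (a - b) ^ (q - 1) * I2 := by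
    have h := holder_step q hq s hs (le_of_lt hlt)
    rwa [hsq] at h
  have hp1 : (0:ℝ) < p - 1 := by linarith
  calc (p - 1) * (q / (p - 2 + q)) ^ q * |(|a| ^ s * a - |b| ^ s * b)| ^ q
      = (p - 1) * ((q / (p - 2 + q)) ^ q * (s + 1) ^ q) * I1 ^ q := by rw [habs]; ring
    _ = (p - 1) * I1 ^ q := by rw [hcoef]; ring
    _ ≤ (p - 1) * ((a - b) ^ (q - 1) * I2) := by nlinarith
    _ = J q (a - b) * (J p a - J p b) := by rw [hJq, hJ]; ring

theorem stmt_1 (p q : ℝ) (hp : 2 ≤ p) (hq : 1 < q) (a b : ℝ) :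
    J q (a - b) * (J p a - J p b) ≥
      (p - 1) * (q / (p - 2 + q)) ^ q *
        |(|a| ^ ((p - 2) / q) * a - |b| ^ ((p - 2) / q) * b)| ^ q := by
  rcases le_total b a with h | h
  · exact key p q hp hq a b h
  · have hk := key p q hp hq b a h
    have hL : J q (a - b) * (J p a - J p b) = J q (b - a) * (J p b - J p a) := by
      simp only [J, show a - b = -(b - a) by ring, abs_neg]
      ring
    have hR : |(|a| ^ ((p - 2) / q) * a - |b| ^ ((p - 2) / q) * b)|
        = |(|b| ^ ((p - 2) / q) * b - |a| ^ ((p - 2) / q) * a)| := abs_sub_comm _ _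
    rw [hL, hR]
    exact hk
end

section
/- Let γ ≥ 2, 1 < p < 2, and a, b, c, d ∈ ℝ. Then (J_γ(a-b) - J_γ(c-d))·(J_p(a-c) - J_p(b-d)) ≥ 4·((γ-1)(p-1)/γ²)·| |a-b|^{(γ-2)/2}(a-b) - |c-d|^{(γ-2)/2}(c-d) |² · (|a-c| + |b-d|)^{p-2}, where the right-hand side is interpreted as 0 when a-c = b-d = 0. -/
open MeasureTheory Set Real

namespace Aux

noncomputable def f (c t : ℝ) : ℝ := |t| ^ c * t

lemma norm_f (c t : ℝ) (hc : c + 1 ≠ 0) : ‖f c t‖ = |t| ^ (c + 1) := by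
  rcases eq_or_ne t 0 with rfl | ht
  · simp [f, Real.zero_rpow hc]
  · rw [f, Real.norm_eq_abs, abs_mul, abs_of_nonneg (Real.rpow_nonneg (abs_nonneg t) c),
      Real.rpow_add_one (abs_ne_zero.2 ht)]

lemma continuous_f {c : ℝ} (hc : 0 < c + 1) : Continuous (f c) := by
  rw [continuous_iff_continuousAt]
  intro t
  rcases eq_or_ne t 0 with rfl | ht
  · have h0 : f c 0 = 0 := by simp [f]
    rw [ContinuousAt, h0]
    have h1 : ContinuousAt (fun s : ℝ => |s| ^ (c + 1)) 0 :=
      (Real.continuousAt_rpow_const |(0:ℝ)| (c + 1) (Or.inr hc.le)).comp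
        continuous_abs.continuousAt
    have hb : Filter.Tendsto (fun s : ℝ => |s| ^ (c + 1)) (nhds 0) (nhds 0) := by
      simpa [Real.zero_rpow hc.ne'] using h1.tendsto
    exact squeeze_zero_norm (fun s => le_of_eq (norm_f c s hc.ne')) hb
  · exact ((Real.continuousAt_rpow_const |t| c (Or.inl (abs_ne_zero.2 ht))).comp
      (continuous_abs.continuousAt)).mul continuousAt_id

lemma hasDerivAt_f (c : ℝ) {t : ℝ} (ht : t ≠ 0) :
    HasDerivAt (f c) ((c + 1) * |t| ^ c) t := by
  rcases ht.lt_or_gt with ht' | ht'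
  · have h1 : HasDerivAt (fun y : ℝ => y ^ (c + 1)) ((c + 1) * (-t) ^ (c + 1 - 1)) (-t) :=
      Real.hasDerivAt_rpow_const (Or.inl (by linarith))
    rw [show c + 1 - 1 = c from by ring] at h1
    have h2 : HasDerivAt (fun s : ℝ => ((-s) ^ (c + 1) : ℝ))
        ((c + 1) * (-t) ^ c * (-1)) t := h1.comp t (hasDerivAt_neg t)
    have e : -((c + 1) * (-t) ^ c * (-1)) = (c + 1) * |t| ^ c := by
      rw [abs_of_neg ht']; ring
    refine (e ▸ h2.neg).congr_of_eventuallyEq ?_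
    filter_upwards [eventually_lt_nhds ht'] with s hs
    rw [f, abs_of_neg hs, Pi.neg_apply, Real.rpow_add_one (by linarith : (-s) ≠ 0)]
    ring
  · have h1 : HasDerivAt (fun y : ℝ => y ^ (c + 1)) ((c + 1) * t ^ (c + 1 - 1)) t :=
      Real.hasDerivAt_rpow_const (Or.inl ht)
    rw [show c + 1 - 1 = c from by ring] at h1
    have e : (c + 1) * t ^ c = (c + 1) * |t| ^ c := by rw [abs_of_pos ht']
    refine (e ▸ h1).congr_of_eventuallyEq ?_
    filter_upwards [eventually_gt_nhds ht'] with s hs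
    rw [f, abs_of_pos hs, Real.rpow_add_one (ne_of_gt hs)]


lemma ii_abs_rpow {c : ℝ} (hc : -1 < c) (a b : ℝ) :
    IntervalIntegrable (fun t : ℝ => |t| ^ c) volume a b := by
  have H : ∀ u : ℝ, 0 ≤ u → IntervalIntegrable (fun t : ℝ => |t| ^ c) volume 0 u := by
    intro u hu
    have h1 : IntervalIntegrable (fun t : ℝ => t ^ c) volume 0 u :=
      intervalIntegral.intervalIntegrable_rpow' hc
    rw [intervalIntegrable_iff, uIoc_of_le hu] at h1 ⊢
    refine h1.congr_fun ?_ measurableSet_Ioc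
    intro t ht
    simp [abs_of_pos ht.1]
  have H' : ∀ u : ℝ, IntervalIntegrable (fun t : ℝ => |t| ^ c) volume 0 u := by
    intro u
    rcases le_total 0 u with hu | hu
    · exact H u hu
    · have h2 := H (-u) (by linarith)
      rw [IntervalIntegrable.iff_comp_neg] at h2
      simpa using h2
  exact (H' a).symm.trans (H' b)

lemma ftc (c : ℝ) (hc : -1 < c) (v u : ℝ) :
    ∫ t in v..u, (c + 1) * |t| ^ c = f c u - f c v := by
  refine integral_eq_of_hasDerivAt_off_countable (f c) (fun t => (c + 1) * |t| ^ c)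
    (s := {0}) (countable_singleton 0) (continuous_f (by linarith)).continuousOn ?_ ?_
  · intro x hx
    exact hasDerivAt_f c (by simpa using hx.2)
  · exact (ii_abs_rpow hc v u).const_mul _

lemma cs {v u : ℝ} (h : v ≤ u) (g : ℝ → ℝ)
    (h1 : IntervalIntegrable g volume v u)
    (h2 : IntervalIntegrable (fun t => g t ^ 2) volume v u) :
    (∫ t in v..u, g t) ^ 2 ≤ (u - v) * ∫ t in v..u, g t ^ 2 := by
  set A := ∫ t in v..u, g t with hA
  set B := ∫ t in v..u, g t ^ 2 with hB
  rcases eq_or_lt_of_le h with rfl | hlt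
  · simp [hA, hB]
  have hL : 0 < u - v := sub_pos.2 hlt
  have hBnn : 0 ≤ B := intervalIntegral.integral_nonneg h fun t _ => sq_nonneg _
  have key : ∀ lam : ℝ, 2 * lam * A ≤ B + lam ^ 2 * (u - v) := by
    intro lam
    have hmono : ∫ t in v..u, 2 * lam * g t ≤ ∫ t in v..u, (g t ^ 2 + lam ^ 2) := by
      refine intervalIntegral.integral_mono_on h (h1.const_mul _)
        (h2.add intervalIntegrable_const) fun t _ => ?_
      nlinarith [sq_nonneg (g t - lam)]
    rw [intervalIntegral.integral_const_mul,
      intervalIntegral.integral_add h2 intervalIntegrable_const,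
      intervalIntegral.integral_const, smul_eq_mul] at hmono
    linarith [hmono]
  have h' := key (A / (u - v))
  have hAe : A = (A / (u - v)) * (u - v) := (div_mul_cancel₀ A hL.ne').symm
  set lam := A / (u - v)
  have h2' : lam ^ 2 * (u - v) ≤ B := by rw [hAe] at h'; nlinarith
  rw [hAe]
  nlinarith [mul_le_mul_of_nonneg_right h2' hL.le]


lemma lem1' {γ : ℝ} (hγ : 2 ≤ γ) {u v : ℝ} (h : v ≤ u) :
    4 * (γ - 1) / γ ^ 2 * (f ((γ - 2) / 2) u - f ((γ - 2) / 2) v) ^ 2 ≤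
      (f (γ - 2) u - f (γ - 2) v) * (u - v) := by
  have hγ0 : (0:ℝ) < γ := by linarith
  set c : ℝ := (γ - 2) / 2 with hc_def
  have hc0 : 0 ≤ c := div_nonneg (by linarith) (by norm_num)
  have hc : -1 < c := by linarith
  have hc2 : -1 < γ - 2 := by linarith
  set A : ℝ := ∫ t in v..u, |t| ^ c with hA_def
  set B : ℝ := ∫ t in v..u, |t| ^ (γ - 2) with hB_def
  have e1 : f (γ - 2) u - f (γ - 2) v = (γ - 1) * B := by
    have h1 := ftc (γ - 2) hc2 v u
    rw [show γ - 2 + 1 = γ - 1 from by ring] at h1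
    rw [← h1, intervalIntegral.integral_const_mul]
  have e2 : f c u - f c v = (γ / 2) * A := by
    have h1 := ftc c hc v u
    rw [show c + 1 = γ / 2 from by rw [hc_def]; ring] at h1
    rw [← h1, intervalIntegral.integral_const_mul]
  have hsq : (fun t : ℝ => (|t| ^ c) ^ 2) = fun t : ℝ => |t| ^ (γ - 2) := by
    funext t
    rw [← Real.rpow_natCast (|t| ^ c) 2, ← Real.rpow_mul (abs_nonneg t)]
    norm_num
    rw [show c * 2 = γ - 2 from by rw [hc_def]; ring]
  have hcs : A ^ 2 ≤ (u - v) * B := by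
    have h2 : IntervalIntegrable (fun t : ℝ => (|t| ^ c) ^ 2) volume v u := by
      rw [hsq]; exact ii_abs_rpow hc2 v u
    have := cs h (fun t => |t| ^ c) (ii_abs_rpow hc v u) h2
    rwa [show (∫ t in v..u, (|t| ^ c) ^ 2) = B from by rw [hB_def, hsq]] at this
  rw [e1, e2]
  have e3 : 4 * (γ - 1) / γ ^ 2 * (γ / 2 * A) ^ 2 = (γ - 1) * A ^ 2 := by
    field_simp
    ring
  rw [e3]
  nlinarith [mul_le_mul_of_nonneg_left hcs (by linarith : (0:ℝ) ≤ γ - 1)]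

lemma lem1 {γ : ℝ} (hγ : 2 ≤ γ) (u v : ℝ) :
    4 * (γ - 1) / γ ^ 2 * (f ((γ - 2) / 2) u - f ((γ - 2) / 2) v) ^ 2 ≤
      (f (γ - 2) u - f (γ - 2) v) * (u - v) := by
  rcases le_total v u with h | h
  · exact lem1' hγ h
  · have h1 := lem1' hγ h
    have e1 : 4 * (γ - 1) / γ ^ 2 * (f ((γ - 2) / 2) u - f ((γ - 2) / 2) v) ^ 2 =
        4 * (γ - 1) / γ ^ 2 * (f ((γ - 2) / 2) v - f ((γ - 2) / 2) u) ^ 2 := by ring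
    have e2 : (f (γ - 2) u - f (γ - 2) v) * (u - v) =
        (f (γ - 2) v - f (γ - 2) u) * (v - u) := by ring
    rw [e1, e2]
    exact h1

lemma lem2' {p : ℝ} (hp1 : 1 < p) (hp2 : p < 2) {x y : ℝ} (h : y ≤ x) :
    (p - 1) * (x - y) * (|x| + |y|) ^ (p - 2) ≤ f (p - 2) x - f (p - 2) y := by
  rcases eq_or_lt_of_le h with rfl | hlt
  · simp
  have hxy : x ≠ 0 ∨ y ≠ 0 := by
    by_contra hcon
    push_neg at hcon
    rw [hcon.1, hcon.2] at hlt
    exact lt_irrefl 0 hlt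
  have hM : 0 < |x| + |y| := by
    rcases hxy with hx | hy
    · have := abs_pos.2 hx; positivity
    · have := abs_pos.2 hy; positivity
  have hc : -1 < p - 2 := by linarith
  have hftc := ftc (p - 2) hc y x
  rw [show p - 2 + 1 = p - 1 from by ring] at hftc
  rw [← hftc]
  have hne : ∀ᵐ t : ℝ, t ≠ 0 := by
    rw [MeasureTheory.ae_iff]
    simp only [not_not]
    simp [Real.volume_singleton (a := 0)]
  have hmono : ∫ t in y..x, (p - 1) * (|x| + |y|) ^ (p - 2) ≤
      ∫ t in y..x, (p - 1) * |t| ^ (p - 2) := by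
    refine intervalIntegral.integral_mono_ae_restrict h intervalIntegrable_const
      ((ii_abs_rpow hc y x).const_mul _) ?_
    filter_upwards [ae_restrict_of_ae hne, ae_restrict_mem measurableSet_Icc] with t ht htm
    have h1 : |t| ≤ |x| + |y| := by
      rw [abs_le]
      constructor
      · linarith [htm.1, neg_abs_le y, abs_nonneg x]
      · linarith [htm.2, le_abs_self x, abs_nonneg y]
    exact mul_le_mul_of_nonneg_left
      (Real.rpow_le_rpow_of_nonpos (abs_pos.2 ht) h1 (by linarith)) (by linarith)
  rw [intervalIntegral.integral_const, smul_eq_mul] at hmono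
  calc (p - 1) * (x - y) * (|x| + |y|) ^ (p - 2)
      = (x - y) * ((p - 1) * (|x| + |y|) ^ (p - 2)) := by ring
    _ ≤ _ := hmono

lemma lem2 {p : ℝ} (hp1 : 1 < p) (hp2 : p < 2) (x y : ℝ) :
    (p - 1) * (x - y) ^ 2 * (|x| + |y|) ^ (p - 2) ≤ (f (p - 2) x - f (p - 2) y) * (x - y) := by
  rcases le_total y x with h | h
  · have h1 := lem2' hp1 hp2 h
    have h2 := mul_le_mul_of_nonneg_right h1 (sub_nonneg.2 h)
    nlinarith [h2]
  · have h1 := lem2' hp1 hp2 h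
    rw [add_comm |y| |x|] at h1
    have h2 := mul_le_mul_of_nonneg_right h1 (sub_nonneg.2 h)
    nlinarith [h2]

end Aux


theorem stmt_3 (γ p : ℝ) (hγ : 2 ≤ γ) (hp1 : 1 < p) (hp2 : p < 2)
    (a b c d : ℝ) :
    (J γ (a - b) - J γ (c - d)) * (J p (a - c) - J p (b - d)) ≥
      4 * ((γ - 1) * (p - 1) / γ ^ 2) *
        |(|a - b| ^ ((γ - 2) / 2) * (a - b) - |c - d| ^ ((γ - 2) / 2) * (c - d))| ^ 2 *
        (|a - c| + |b - d|) ^ (p - 2) := by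

  have hγ0 : (0:ℝ) < γ := by linarith
  set u := a - b with hu
  set v := c - d with hv
  set x := a - c with hx
  set y := b - d with hy
  have hD : x - y = u - v := by rw [hu, hv, hx, hy]; ring
  have H1 := Aux.lem1 hγ u v
  have H2 := Aux.lem2 hp1 hp2 x y
  simp only [Aux.f] at H1 H2
  simp only [J]
  rw [ge_iff_le, sq_abs]
  rw [← hD] at H1
  set G := |u| ^ ((γ - 2) / 2) * u - |v| ^ ((γ - 2) / 2) * v with hG
  set M := (|x| + |y|) ^ (p - 2) with hM
  set P := |u| ^ (γ - 2) * u - |v| ^ (γ - 2) * v with hP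
  set Q := |x| ^ (p - 2) * x - |y| ^ (p - 2) * y with hQ
  have hMnn : 0 ≤ M := Real.rpow_nonneg (by positivity) _
  rcases eq_or_ne (x - y) 0 with h0 | h0
  · have huv : u = v := by
      have : u - v = 0 := by rw [← hD]; exact h0
      linarith
    have hG0 : G = 0 := by rw [hG, huv]; ring
    have hP0 : P = 0 := by rw [hP, huv]; ring
    rw [hG0, hP0]
    simp
  · have hD2 : 0 < (x - y) ^ 2 := by positivity
    have hR1 : 0 ≤ 4 * (γ - 1) / γ ^ 2 * G ^ 2 :=
      mul_nonneg (div_nonneg (by linarith) (by positivity)) (sq_nonneg G)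
    have hR2 : 0 ≤ (p - 1) * (x - y) ^ 2 * M :=
      mul_nonneg (mul_nonneg (by linarith) (sq_nonneg _)) hMnn
    have hprod : (4 * (γ - 1) / γ ^ 2 * G ^ 2) * ((p - 1) * (x - y) ^ 2 * M) ≤
        (P * (x - y)) * (Q * (x - y)) :=
      mul_le_mul H1 H2 hR2 (le_trans hR1 H1)
    apply le_of_mul_le_mul_right _ hD2
    calc 4 * ((γ - 1) * (p - 1) / γ ^ 2) * G ^ 2 * M * (x - y) ^ 2
        = (4 * (γ - 1) / γ ^ 2 * G ^ 2) * ((p - 1) * (x - y) ^ 2 * M) := by ring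
      _ ≤ (P * (x - y)) * (Q * (x - y)) := hprod
      _ = P * Q * (x - y) ^ 2 := by ring
end
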